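/- arXiv:1401.2903 — 4 statements merged into one kernel-verified Lean document; each statement's English description precedes it below -/
import Mathlib

section
/- Every seminorm p on a *-algebra A satisfying the C*-condition p(a*a) = p(a)^2 for all a ∈ A is *-preserving, i.e., p(a*) = p(a) for all a ∈ A. -/
open Complex

set_option linter.unusedSectionVars false
set_option maxHeartbeats 1000000

section CStarAux

variable {A : Type*} [Ring A] [StarRing A] [Algebra ℂ A]

private theorem cstarAux_pdouble (p : Seminorm ℂ A) (z : A) : p (z + z) = 2 * p z := by
  rw [← two_smul ℂ z, map_smul_eq_mul]; norm_num

private theorem cstarAux_pol1 (p : Seminorm ℂ A) (hC : ∀ a : A, p (star a * a) = p a ^ 2)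
    (x y : A) : p (star x * y + star y * x) ≤ (p x + p y)^2 := by
  have hid : (2:ℂ) • (star x * y + star y * x)
      = star (x+y) * (x+y) - star (x-y) * (x-y) := by
    simp only [star_add, star_sub, two_smul]; noncomm_ring
  have h2 : (2:ℝ) * p (star x * y + star y * x)
      = p ((2:ℂ) • (star x * y + star y * x)) := by
    rw [map_smul_eq_mul]; norm_num
  rw [hid] at h2
  have h3 : p (star (x+y) * (x+y) - star (x-y) * (x-y))
      ≤ p (x+y)^2 + p (x-y)^2 := by
    calc p (star (x+y) * (x+y) - star (x-y) * (x-y))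
        ≤ p (star (x+y) * (x+y)) + p (star (x-y) * (x-y)) := map_sub_le_add p _ _
      _ = p (x+y)^2 + p (x-y)^2 := by rw [hC, hC]
  have h4 : p (x+y) ≤ p x + p y := map_add_le_add p x y
  have h5 : p (x-y) ≤ p x + p y := map_sub_le_add p x y
  nlinarith [apply_nonneg p (x+y), apply_nonneg p (x-y), apply_nonneg p x, apply_nonneg p y]

private theorem cstarAux_pol2 (p : Seminorm ℂ A) (hC : ∀ a : A, p (star a * a) = p a ^ 2)
    (x y : A) : p (star x * y + star y * x) ≤ 4 * p x * p y := by
  have hq : ∀ q : ℚ, 0 < q →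
      p (star x * y + star y * x) ≤ ((q:ℝ) * p x + (q:ℝ)⁻¹ * p y)^2 := by
    intro q hq
    have key := cstarAux_pol1 p hC ((q:ℂ) • x) (((q⁻¹:ℚ):ℂ) • y)
    have hsx : star ((q:ℂ) • x) = (q:ℂ) • star x :=
      map_ratCast_smul (starAddEquiv : A ≃+ A) ℂ ℂ q x
    have hsy : star (((q⁻¹:ℚ):ℂ) • y) = ((q⁻¹:ℚ):ℂ) • star y :=
      map_ratCast_smul (starAddEquiv : A ≃+ A) ℂ ℂ q⁻¹ y
    have hid : star ((q:ℂ) • x) * (((q⁻¹:ℚ):ℂ) • y)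
        + star (((q⁻¹:ℚ):ℂ) • y) * ((q:ℂ) • x)
        = star x * y + star y * x := by
      rw [hsx, hsy, smul_mul_smul_comm, smul_mul_smul_comm]
      have hqc : ((q:ℚ):ℂ) ≠ 0 := by exact_mod_cast hq.ne'
      have h1 : ((q:ℚ):ℂ) * ((q⁻¹:ℚ):ℂ) = 1 := by
        push_cast; field_simp
      have h2 : ((q⁻¹:ℚ):ℂ) * ((q:ℚ):ℂ) = 1 := by
        push_cast; field_simp
      rw [h1, h2, one_smul, one_smul]
    rw [hid] at key
    have hnx : p ((q:ℂ) • x) = (q:ℝ) * p x := by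
      rw [map_smul_eq_mul]
      congr 1
      rw [show ((q:ℚ):ℂ) = ((q:ℝ):ℂ) by push_cast; ring, Complex.norm_real]
      exact abs_of_pos (by exact_mod_cast hq)
    have hny : p (((q⁻¹:ℚ):ℂ) • y) = (q:ℝ)⁻¹ * p y := by
      rw [map_smul_eq_mul]
      congr 1
      rw [show ((q⁻¹:ℚ):ℂ) = (((q:ℝ)⁻¹:ℝ):ℂ) by push_cast; ring, Complex.norm_real]
      exact abs_of_pos (by positivity)
    rw [hnx, hny] at key
    exact key
  apply le_of_forall_pos_le_add
  intro ε hε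
  rcases eq_or_lt_of_le (apply_nonneg p x) with hx0 | hx0
  · rcases eq_or_lt_of_le (apply_nonneg p y) with hy0 | hy0
    · have key := hq 1 one_pos
      simp only [Rat.cast_one, one_mul, inv_one] at key
      nlinarith
    · obtain ⟨n, hn⟩ := exists_nat_gt (max 1 ((p y)^2 / ε))
      have hn1 : (1:ℝ) ≤ (n:ℝ) := le_of_lt (lt_of_le_of_lt (le_max_left _ _) hn)
      have hn2 : (p y)^2 / ε < (n:ℝ) := lt_of_le_of_lt (le_max_right _ _) hn
      have hnpos : (0:ℝ) < (n:ℝ) := by linarith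
      have key := hq (n:ℚ) (by exact_mod_cast hnpos)
      push_cast at key
      rw [← hx0] at key
      have hlt2 : (p y)^2 / (n:ℝ) < ε := by
        rw [div_lt_iff₀ hnpos]
        rw [div_lt_iff₀ hε] at hn2
        linarith
      refine le_of_lt (lt_of_le_of_lt ?_ (lt_of_lt_of_le hlt2 ?_))
      · calc p (star x * y + star y * x) ≤ ((n:ℝ) * 0 + ((n:ℝ))⁻¹ * p y)^2 := key
          _ = ((n:ℝ))⁻¹^2 * (p y)^2 := by ring
          _ ≤ (p y)^2 / n := by
              rw [div_eq_mul_inv]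
              have h1 : ((n:ℝ))⁻¹ ≤ 1 := by rw [inv_le_one_iff₀]; right; exact hn1
              have h2 : (0:ℝ) < (n:ℝ)⁻¹ := by positivity
              nlinarith [sq_nonneg (p y)]
      · nlinarith [apply_nonneg p x, apply_nonneg p y]
  · rcases eq_or_lt_of_le (apply_nonneg p y) with hy0 | hy0
    · obtain ⟨n, hn⟩ := exists_nat_gt (max 1 ((p x)^2 / ε))
      have hn1 : (1:ℝ) ≤ (n:ℝ) := le_of_lt (lt_of_le_of_lt (le_max_left _ _) hn)
      have hn2 : (p x)^2 / ε < (n:ℝ) := lt_of_le_of_lt (le_max_right _ _) hn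
      have hnpos : (0:ℝ) < (n:ℝ) := by linarith
      have hnq : (0:ℚ) < ((n:ℚ))⁻¹ := by
        have : (0:ℚ) < (n:ℚ) := by exact_mod_cast hnpos
        positivity
      have key := hq ((n:ℚ))⁻¹ hnq
      push_cast at key
      rw [inv_inv, ← hy0] at key
      have hlt2 : (p x)^2 / (n:ℝ) < ε := by
        rw [div_lt_iff₀ hnpos]
        rw [div_lt_iff₀ hε] at hn2
        linarith
      refine le_of_lt (lt_of_le_of_lt ?_ (lt_of_lt_of_le hlt2 ?_))
      · calc p (star x * y + star y * x) ≤ ((n:ℝ)⁻¹ * p x + (n:ℝ) * 0)^2 := key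
          _ = ((n:ℝ))⁻¹^2 * (p x)^2 := by ring
          _ ≤ (p x)^2 / n := by
              rw [div_eq_mul_inv]
              have h1 : ((n:ℝ))⁻¹ ≤ 1 := by rw [inv_le_one_iff₀]; right; exact hn1
              have h2 : (0:ℝ) < (n:ℝ)⁻¹ := by positivity
              nlinarith [sq_nonneg (p x)]
      · nlinarith [apply_nonneg p x, apply_nonneg p y]
    · -- both positive
      obtain ⟨X, hX⟩ : ∃ X:ℝ, X = p x := ⟨_, rfl⟩
      obtain ⟨Y, hY⟩ : ∃ Y:ℝ, Y = p y := ⟨_, rfl⟩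
      rw [← hX] at hx0 ⊢
      rw [← hY] at hy0 ⊢
      have hq' : ∀ q : ℚ, 0 < q →
          p (star x * y + star y * x) ≤ ((q:ℝ) * X + (q:ℝ)⁻¹ * Y)^2 := by
        intro q hqq; rw [hX, hY]; exact hq q hqq
      clear hq hX hY
      obtain ⟨g, hg⟩ : ∃ g:ℝ, g = Real.sqrt (X * Y) := ⟨_, rfl⟩
      have hg2 : g^2 = X * Y := by rw [hg]; exact Real.sq_sqrt (by positivity)
      have hgpos : 0 < g := by rw [hg]; exact Real.sqrt_pos.mpr (by positivity)
      obtain ⟨c, hc⟩ : ∃ c:ℝ, c = Real.sqrt (Y / X) := ⟨_, rfl⟩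
      have hc2 : c^2 = Y / X := by rw [hc]; exact Real.sq_sqrt (by positivity)
      have hcpos : 0 < c := by rw [hc]; exact Real.sqrt_pos.mpr (by positivity)
      have hcX : c * X = g := by
        have h1 : (c*X)^2 = X*Y := by
          rw [mul_pow, hc2]; field_simp
        rw [hg, ← h1, Real.sqrt_sq (by positivity)]
      have hcY : c⁻¹ * Y = g := by
        have h1 : (c⁻¹*Y)^2 = X*Y := by
          rw [mul_pow, inv_pow, hc2]
          field_simp
        rw [hg, ← h1, Real.sqrt_sq (by positivity)]
      obtain ⟨δ, hδ⟩ : ∃ δ:ℝ, δ = min 1 (ε / (4*g*X + X^2 + 1)) := ⟨_, rfl⟩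
      have hδpos : 0 < δ := by
        rw [hδ]; exact lt_min one_pos (by positivity)
      have hδ1 : δ ≤ 1 := hδ ▸ min_le_left _ _
      have hδ2 : δ ≤ ε / (4*g*X + X^2 + 1) := hδ ▸ min_le_right _ _
      obtain ⟨q, hq1, hq2⟩ := exists_rat_btwn (show c < c + δ by linarith)
      have hqpos : (0:ℚ) < q := by exact_mod_cast hcpos.trans hq1
      have key := hq' q hqpos
      have hqR : (0:ℝ) < (q:ℝ) := by exact_mod_cast hqpos
      have hb1 : (q:ℝ) * X ≤ (c + δ) * X := by nlinarith
      have hb2 : (q:ℝ)⁻¹ * Y ≤ c⁻¹ * Y := by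
        have h3 : (q:ℝ)⁻¹ ≤ c⁻¹ := inv_anti₀ hcpos (le_of_lt hq1)
        nlinarith
      have hsum : (q:ℝ) * X + (q:ℝ)⁻¹ * Y ≤ 2*g + δ * X := by
        nlinarith [hcX, hcY]
      have hsumpos : 0 ≤ (q:ℝ) * X + (q:ℝ)⁻¹ * Y := by positivity
      have hd : δ * (4*g*X + X^2 + 1) ≤ ε := by
        rw [le_div_iff₀ (by positivity)] at hδ2
        linarith
      calc p (star x * y + star y * x) ≤ ((q:ℝ) * X + (q:ℝ)⁻¹ * Y)^2 := key
        _ ≤ (2*g + δ*X)^2 := pow_le_pow_left₀ hsumpos hsum 2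
        _ ≤ 4 * X * Y + ε := by
          have hdd : δ*δ*X^2 ≤ δ*X^2 := by nlinarith [mul_nonneg (mul_nonneg hδpos.le (sub_nonneg.mpr hδ1)) (sq_nonneg X)]
          nlinarith [hd, hdd, hδpos.le, hg2, mul_nonneg (mul_nonneg hδpos.le hgpos.le) hx0.le]

private theorem cstarAux_sa_pow (p : Seminorm ℂ A) (hC : ∀ a : A, p (star a * a) = p a ^ 2)
    (x : A) (hx : star x = x) : ∀ k : ℕ, p (x ^ (2^k)) = (p x)^(2^k) := by
  intro k
  induction k with
  | zero => simp
  | succ k ih =>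
    have h1 : (2:ℕ)^(k+1) = 2^k + 2^k := by rw [pow_succ]; ring
    have h2 : x ^ ((2:ℕ)^(k+1)) = star (x^(2^k)) * x^(2^k) := by
      rw [star_pow, hx, h1, pow_add]
    rw [h2, hC, ih, h1, pow_add, sq]

private theorem cstarAux_phi (p : Seminorm ℂ A) (hC : ∀ a : A, p (star a * a) = p a ^ 2)
    (x : A) (hx : star x = x) :
    ∀ k : ℕ, p (x ^ (2^k - 1)) ≤ 2^k * (p x)^(2^k - 1) := by
  intro k
  induction k with
  | zero =>
    have h1 := hC 1
    simp only [star_one, mul_one] at h1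
    simp only [pow_zero]
    norm_num
    nlinarith [apply_nonneg p 1]
  | succ k ih =>
    have h2k : 1 ≤ (2:ℕ)^k := Nat.one_le_two_pow
    have hss : (2:ℕ)^(k+1) = 2^k * 2 := by rw [pow_succ]
    have hsplit : (2:ℕ)^(k+1) - 1 = 2^k + (2^k - 1) := by omega
    have key := cstarAux_pol2 p hC (x^(2^k)) (x^(2^k - 1))
    rw [star_pow, star_pow, hx, ← pow_add, ← pow_add] at key
    have hco : (2:ℕ)^k - 1 + 2^k = 2^k + (2^k - 1) := by omega
    rw [hco, cstarAux_pdouble] at key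
    have hupper := mul_le_mul_of_nonneg_left (mul_le_mul_of_nonneg_left ih
      (by positivity : (0:ℝ) ≤ p (x^(2^k)))) (by norm_num : (0:ℝ) ≤ 4)
    have hpow := cstarAux_sa_pow p hC x hx k
    calc p (x^(2^(k+1) - 1)) = p (x^(2^k + (2^k - 1))) := by rw [hsplit]
      _ ≤ 2 * p (x^(2^k)) * p (x^(2^k-1)) := by linarith
      _ ≤ 2 * (p x)^(2^k) * (2^k * (p x)^(2^k - 1)) := by
          rw [hpow]
          nlinarith [ih, apply_nonneg p (x^(2^k - 1)), pow_nonneg (apply_nonneg p x) (2^k),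
            pow_nonneg (apply_nonneg p x) (2^k - 1), pow_nonneg (apply_nonneg p x) (2^k)]
      _ = 2^(k+1) * (p x)^(2^(k+1) - 1) := by
          rw [hsplit, pow_add]
          ring

private theorem cstarAux_Lcore (a : A) : ∀ n : ℕ, star a * ((a * star a)^n * a) = (star a * a)^(n+1) := by
  intro n
  induction n with
  | zero => simp
  | succ n ih =>
    have h1 : (a * star a)^(n+1) * a = a * (star a * ((a * star a)^n * a)) := by
      rw [pow_succ']
      simp [mul_assoc]
    rw [h1, ih, ← mul_assoc, ← pow_succ']

private theorem cstarAux_Lswap (a : A) : ∀ n : ℕ, a * (star a * a)^n = (a * star a)^n * a := by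
  intro n
  induction n with
  | zero => simp
  | succ n ih =>
    rw [pow_succ, ← mul_assoc, ih, pow_succ]
    simp [mul_assoc]

private theorem cstarAux_Hk (p : Seminorm ℂ A) (hC : ∀ a : A, p (star a * a) = p a ^ 2)
    (a : A) (k : ℕ) :
    (p (star a)^2)^(2^k) ≤ 8 * ((2:ℝ)^k) * p (star a)^2 * (p a^2)^(2^k - 1)
      + 4 * ((2:ℝ)^k) * p (star a) * p a * (p a^2)^(2^k - 1) := by
  have hm1 : 1 ≤ (2:ℕ)^k := Nat.one_le_two_pow
  have hsu : star (star a * a) = star a * a := by rw [star_mul, star_star]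
  have hsv : star (a * star a) = a * star a := by rw [star_mul, star_star]
  have hpu : p (star a * a) = p a ^ 2 := hC a
  have hpv : p (a * star a) = p (star a) ^ 2 := by
    have := hC (star a); rwa [star_star] at this
  set s := p (star a) with hs
  set t := p a with ht
  -- P := p ((a * star a)^(2^k - 1) * a)
  have hziden : star ((a * star a)^(2^k-1) * a) * ((a * star a)^(2^k-1) * a)
      = (star a * a)^(2^(k+1) - 1) := by
    rw [star_mul, star_pow, hsv]
    have h1 : (star a * (a*star a)^(2^k-1)) * ((a*star a)^(2^k-1) * a)
        = star a * ((a*star a)^(2^k-1+(2^k-1)) * a) := by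
      rw [pow_add]
      simp [mul_assoc]
    rw [h1, cstarAux_Lcore]
    congr 1
    have : (2:ℕ)^(k+1) = 2^k*2 := by rw [pow_succ]
    omega
  have hP2 : p ((a * star a)^(2^k-1) * a) ^ 2 = p ((star a * a)^(2^(k+1) - 1)) := by
    have := hC ((a * star a)^(2^k-1) * a)
    rw [hziden] at this
    linarith [this]
  -- upper bound on p (u^(2^(k+1)-1))
  have hu2 : p ((star a * a)^(2^(k+1) - 1)) ≤ 2^(k+1) * (t^2)^(2^(k+1)-1) := by
    have h := cstarAux_phi p hC _ hsu (k+1)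
    rwa [hpu] at h
  -- bound on P
  have hPb : p ((a * star a)^(2^k-1) * a) ≤ (2:ℝ)^(k+1) * t * (t^2)^(2^k - 1) := by
    have htnn : (0:ℝ) ≤ t := apply_nonneg p a
    apply le_of_pow_le_pow_left₀ two_ne_zero (by positivity)
    rw [hP2]
    have e2 : (t^2) * ((t^2)^(2^k-1))^2 = (t^2)^(2^(k+1)-1) := by
      rw [← pow_mul, ← pow_succ']
      congr 1
      have : (2:ℕ)^(k+1) = 2^k*2 := by rw [pow_succ]
      omega
    have e1 : ((2:ℝ)^(k+1) * t * (t^2)^(2^k-1))^2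
        = ((2:ℝ)^(k+1))^2 * ((t^2) * ((t^2)^(2^k-1))^2) := by ring
    rw [e1, e2]
    have h1 : (1:ℝ) ≤ (2:ℝ)^(k+1) := one_le_pow₀ (by norm_num)
    nlinarith [hu2, pow_nonneg (sq_nonneg t) (2^(k+1)-1)]
  -- bound on p(u^(2^k -1))
  have hub : p ((star a * a)^(2^k - 1)) ≤ 2^k * (t^2)^(2^k-1) := by
    have h := cstarAux_phi p hC _ hsu k
    rwa [hpu] at h
  -- V bound
  have hV : p ((star a * a)^(2^k-1) * star a)
      ≤ 4 * p ((star a * a)^(2^k-1)) * s + p ((a * star a)^(2^k-1) * a) := by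
    have htri : p ((star a * a)^(2^k-1) * star a)
        ≤ p ((star a * a)^(2^k-1) * star a + a * (star a * a)^(2^k-1))
          + p (a * (star a * a)^(2^k-1)) := by
      have h := map_sub_le_add p
        ((star a * a)^(2^k-1) * star a + a * (star a * a)^(2^k-1))
        (a * (star a * a)^(2^k-1))
      rwa [add_sub_cancel_right] at h
    have hpol := cstarAux_pol2 p hC ((star a * a)^(2^k-1)) (star a)
    rw [star_pow, hsu, star_star] at hpol
    have hswap2 : p (a * (star a * a)^(2^k-1)) = p ((a * star a)^(2^k-1) * a) := by
      rw [cstarAux_Lswap]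
    linarith
  -- F5
  have hF5 : p ((a * star a)^(2^k)) ≤ 2 * s * p ((star a * a)^(2^k -1) * star a) := by
    have hpol := cstarAux_pol2 p hC (star a) ((star a * a)^(2^k-1) * star a)
    rw [star_star, star_mul, star_pow, hsu, star_star] at hpol
    have h2 : a * (star a * a)^(2^k-1) * star a = (a * star a)^(2^k) := by
      rw [cstarAux_Lswap, mul_assoc, ← pow_succ]
      congr 1
      omega
    have hident : a * ((star a * a)^(2^k-1) * star a)
        + a * (star a * a)^(2^k-1) * star a
        = (a * star a)^(2^k) + (a * star a)^(2^k) := by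
      rw [← mul_assoc, h2]
    rw [hident, cstarAux_pdouble] at hpol
    linarith
  -- assemble
  have hvm : p ((a * star a)^(2^k)) = (s^2)^(2^k) := by
    rw [cstarAux_sa_pow p hC _ hsv k, hpv]
  rw [hvm] at hF5
  have hsnn : (0:ℝ) ≤ s := apply_nonneg p (star a)
  have htnn : (0:ℝ) ≤ t := apply_nonneg p a
  have hqnn : (0:ℝ) ≤ (t^2)^(2^k-1) := by positivity
  have c2 : p ((star a * a)^(2^k -1) * star a)
      ≤ 4*((2:ℝ)^k*(t^2)^(2^k-1))*s + (2:ℝ)^(k+1)*t*(t^2)^(2^k-1) := by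
    have h4 : 4 * p ((star a * a)^(2^k-1)) * s ≤ 4*((2:ℝ)^k*(t^2)^(2^k-1))*s := by
      nlinarith [mul_le_mul_of_nonneg_right hub hsnn]
    linarith [hPb, hV]
  have c3 : 2*s*p ((star a * a)^(2^k -1) * star a)
      ≤ 2*s*(4*((2:ℝ)^k*(t^2)^(2^k-1))*s + (2:ℝ)^(k+1)*t*(t^2)^(2^k-1)) :=
    mul_le_mul_of_nonneg_left c2 (by positivity)
  have c4 : 2*s*(4*((2:ℝ)^k*(t^2)^(2^k-1))*s + (2:ℝ)^(k+1)*t*(t^2)^(2^k-1))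
      = 8 * (2:ℝ)^k * s^2 * (t^2)^(2^k - 1) + 4 * (2:ℝ)^k * s * t * (t^2)^(2^k - 1) := by
    ring
  linarith

end CStarAux

/-- Every seminorm `p` on a `*`-algebra `A` satisfying the C*-condition
`p (a* a) = p a ^ 2` is `*`-preserving. -/
theorem cstar_seminorm_star_preserving {A : Type*} [Ring A] [StarRing A] [Algebra ℂ A]
    (p : Seminorm ℂ A) (hC : ∀ a : A, p (star a * a) = p a ^ 2) :
    ∀ a : A, p (star a) = p a := by
  have main : ∀ b : A, p (star b) ≤ p b := by
    intro a
    rcases eq_or_lt_of_le (apply_nonneg p a) with ht0 | ht0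
    · -- p a = 0
      have h := cstarAux_Hk p hC a 1
      rw [← ht0] at h
      norm_num at h
      have h4 : (p (star a))^4 = 0 := by
        have hle : (p (star a))^4 ≤ 0 := by rw [h]; norm_num
        have hge : (0:ℝ) ≤ (p (star a))^4 := by positivity
        linarith
      have hs0 : p (star a) = 0 :=
        pow_eq_zero_iff (M₀ := ℝ) (n := 4) (by norm_num) |>.mp h4
      rw [hs0, ← ht0]
    · by_contra hst
      push_neg at hst
      have hr : 1 < p (star a) / p a := (one_lt_div ht0).mpr hst
      obtain ⟨r, hrdef⟩ : ∃ r : ℝ, r = p (star a) / p a := ⟨_, rfl⟩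
      rw [← hrdef] at hr
      have hsrt : p (star a) = r * p a := by
        rw [hrdef]; field_simp
      have htend := tendsto_pow_const_div_const_pow_of_one_lt 2 hr
      have hev := htend.eventually_lt_const (show (0:ℝ) < (r^2)⁻¹ by positivity)
      rw [Filter.eventually_atTop] at hev
      obtain ⟨M, hM⟩ := hev
      obtain ⟨k, hk⟩ : ∃ k : ℕ, k = M + 4 := ⟨_, rfl⟩
      have hNM : M ≤ 2^(k+1) := by
        calc M ≤ 2^M := (Nat.lt_two_pow_self (n := M)).le
          _ ≤ 2^(k+1) := Nat.pow_le_pow_right (by norm_num) (by omega)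
      have hNkey := hM (2^(k+1)) hNM
      rw [div_lt_iff₀ (by positivity)] at hNkey
      -- hNkey : ((2^(k+1):ℕ):ℝ)^2 < (r^2)⁻¹ * r^(2^(k+1))
      have hcast : ((2^(k+1):ℕ):ℝ) = (2:ℝ)^(k+1) := by push_cast; ring
      rw [hcast] at hNkey
      have hN2 : ((2:ℝ)^(k+1))^2 * r^2 < r^(2^(k+1)) := by
        have hrpos : (0:ℝ) < r := by linarith
        have h0 : (r^2)⁻¹ * r^(2^(k+1)) * r^2 = r^(2^(k+1)) := by
          field_simp
        nlinarith [mul_lt_mul_of_pos_right hNkey (show (0:ℝ) < r^2 by positivity)]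
      -- other side from cstarAux_Hk
      have hkk := cstarAux_Hk p hC a k
      rw [hsrt] at hkk
      have htpos : (0:ℝ) < p a := ht0
      have hXpos : (0:ℝ) < ((p a)^2)^(2^k) := by positivity
      have hsplit : ((p a)^2)^(2^k) = (p a)^2 * ((p a)^2)^(2^k - 1) := by
        rw [← pow_succ']
        congr 1
        have := Nat.one_le_two_pow (n := k)
        omega
      have hLHS : ((r * p a)^2)^(2^k) = r^(2^(k+1)) * ((p a)^2)^(2^k) := by
        rw [mul_pow, ← pow_mul]
        congr 2
        rw [pow_succ]
        ring
      rw [hLHS] at hkk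
      have hRHS : 8 * (2:ℝ)^k * (r * p a)^2 * ((p a)^2)^(2^k - 1)
          + 4 * (2:ℝ)^k * (r * p a) * p a * ((p a)^2)^(2^k - 1)
          = (8 * (2:ℝ)^k * r^2 + 4 * (2:ℝ)^k * r) * ((p a)^2)^(2^k) := by
        rw [hsplit]; ring
      rw [hRHS] at hkk
      have hfin : r^(2^(k+1)) ≤ 8 * (2:ℝ)^k * r^2 + 4 * (2:ℝ)^k * r :=
        le_of_mul_le_mul_right (by nlinarith [hkk, hXpos]) hXpos
      -- now contradiction
      have hr2 : r ≤ r^2 := by nlinarith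
      have h6N : 8 * (2:ℝ)^k * r^2 + 4 * (2:ℝ)^k * r ≤ 6 * (2:ℝ)^(k+1) * r^2 := by
        have hknn : (0:ℝ) ≤ (2:ℝ)^k := by positivity
        have : (2:ℝ)^(k+1) = 2 * 2^k := by rw [pow_succ]; ring
        nlinarith
      have hN32 : (32:ℝ) ≤ (2:ℝ)^(k+1) := by
        calc (32:ℝ) = 2^5 := by norm_num
          _ ≤ 2^(k+1) := by
              apply pow_le_pow_right₀ (by norm_num)
              omega
      have hrpos : (0:ℝ) < r := by linarith
      have hQr : 0 < (2:ℝ)^(k+1) * r^2 := by positivity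
      nlinarith [hN2, hfin, h6N, hN32, hQr,
        mul_nonneg (mul_nonneg (sub_nonneg.mpr hN32) (show (0:ℝ) ≤ 2^(k+1) by positivity)) (sq_nonneg r)]
  intro a
  refine le_antisymm (main a) ?_
  have h := main (star a)
  rwa [star_star] at h
end

section
/- Let h : X → X be a homeomorphism of a compactly countably generated space X = lim_→ K_n such that for each n there is m with h^k(K_n) ⊆ K_m for all integers k. Then α_n(f) := f ∘ h^n defines a strongly bounded action of ℤ on the pro-C*-algebra C(X); if moreover h(K_n) = K_n for all n, then α is an inverse limit action (p_{K_n}(α_k(f)) = p_{K_n}(f) for all k, n, f). -/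
lemma bdd_sup_norm_aux {X : Type*} [TopologicalSpace X] (f : C(X, ℂ)) {T : Set X}
    (hT : IsCompact T) : BddAbove (Set.range fun x : T => ‖f (x : X)‖) := by
  rcases hT.exists_bound_of_continuousOn (f.continuous.norm.continuousOn) with ⟨C, hC⟩
  exact ⟨C, by rintro y ⟨x, rfl⟩; simpa using hC x x.2⟩

lemma sup_norm_comp_le_aux {X : Type*} [TopologicalSpace X] (f : C(X, ℂ))
    {S T : Set X} (hT : IsCompact T) (g : X → X) (hg : ∀ x ∈ S, g x ∈ T) :
    (⨆ x : S, ‖f (g (x : X))‖) ≤ ⨆ x : T, ‖f (x : X)‖ := by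
  rcases isEmpty_or_nonempty S with hS | hS
  · rw [Real.iSup_of_isEmpty]
    exact Real.iSup_nonneg fun x => norm_nonneg _
  · exact ciSup_le fun x => le_ciSup_of_le (bdd_sup_norm_aux f hT)
      ⟨g x, hg x x.2⟩ le_rfl

/-- Let `h : X → X` be a homeomorphism of a compactly countably generated space
`X = lim_→ K_n` such that for each `n` there is `m` with `h^k (K_n) ⊆ K_m` for all
integers `k` (here `hpow k = h^k` denotes the `k`-th iterate of `h`).  Then
`α_k (f) = f ∘ h^k` defines a strongly bounded action of `ℤ` on the pro-C*-algebra
`C(X)`; if moreover `h (K_n) = K_n` for all `n`, then `α` is an inverse limit action: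
`p_{K_n} (α_k f) = p_{K_n} (f)` for all `k`, `n`, `f`. -/
theorem homeo_iterates_action_strongly_bounded
    {X : Type*} [TopologicalSpace X] [T2Space X]
    (h : X ≃ₜ X)
    (hpow : ℤ → X ≃ₜ X)
    (hpow_zero : hpow 0 = Homeomorph.refl X)
    (hpow_succ : ∀ k : ℤ, hpow (k + 1) = (hpow k).trans h)
    (K : ℕ → Set X)
    (hKcompact : ∀ n, IsCompact (K n))
    (hKmono : Monotone K)
    (hKcover : ∀ C : Set X, IsCompact C → ∃ n, C ⊆ K n)
    (hhK : ∀ n, ∃ m, ∀ k : ℤ, (hpow k) '' K n ⊆ K m) :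
    (∀ n, ∃ m, ∀ (k : ℤ) (f : C(X, ℂ)),
        (⨆ x : K n, ‖f (hpow k (x : X))‖) ≤ ⨆ x : K m, ‖f (x : X)‖) ∧
    ((∀ n, h '' K n = K n) →
      ∀ (n : ℕ) (k : ℤ) (f : C(X, ℂ)),
        (⨆ x : K n, ‖f (hpow k (x : X))‖) = ⨆ x : K n, ‖f (x : X)‖) := by
  constructor
  · intro n
    obtain ⟨m, hm⟩ := hhK n
    exact ⟨m, fun k f => sup_norm_comp_le_aux f (hKcompact m) (hpow k)
      (fun x hx => hm k ⟨x, hx, rfl⟩)⟩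
  · intro hinv n k f
    have hsymm : h.symm '' K n = K n := by
      calc h.symm '' K n = h.symm '' (h '' K n) := by rw [hinv n]
        _ = K n := h.toEquiv.symm_image_image _
    have key : ∀ j : ℤ, (hpow j) '' K n = K n := by
      intro j
      induction j using Int.induction_on with
      | zero => simp [hpow_zero]
      | succ i ih =>
          have hfun : ⇑(hpow ((i : ℤ) + 1)) = ⇑h ∘ ⇑(hpow (i : ℤ)) := by
            rw [hpow_succ]; rfl
          rw [hfun, Set.image_comp, ih, hinv n]
      | pred i ih =>
          have hs := hpow_succ (-(i : ℤ) - 1)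
          rw [show (-(i : ℤ) - 1 + 1) = -(i : ℤ) by ring] at hs
          have hfun : ⇑(hpow (-(i : ℤ) - 1)) = ⇑h.symm ∘ ⇑(hpow (-(i : ℤ))) := by
            funext x
            have : hpow (-(i : ℤ)) x = h (hpow (-(i : ℤ) - 1) x) := by rw [hs]; rfl
            simp [this]
          rw [hfun, Set.image_comp, ih, hsymm]
    apply le_antisymm
    · exact sup_norm_comp_le_aux f (hKcompact n) (hpow k)
        (fun x hx => (key k) ▸ ⟨x, hx, rfl⟩)
    · have hsk : ∀ x ∈ K n, (hpow k).symm x ∈ K n := by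
        intro x hx
        have : (hpow k).symm '' K n = K n := by
          calc (hpow k).symm '' K n = (hpow k).symm '' ((hpow k) '' K n) := by rw [key k]
            _ = K n := (hpow k).toEquiv.symm_image_image _
        exact this ▸ ⟨x, hx, rfl⟩
      have := sup_norm_comp_le_aux (f.comp ((hpow k : X ≃ₜ X) : C(X, X))) (hKcompact n)
        (hpow k).symm hsk
      simpa using this
end

section
/- Let (G, α, A[τ_Γ]) be a pro-C*-dynamical system with α strongly bounded, (φ, H) a continuous representation of A[τ_Γ], and φ̃ the induced representation on L²(G,H) given by (φ̃(a)ξ)(s) = φ(α_{s^{-1}}(a))(ξ(s)). Then ker φ̃ ⊆ ker φ. -/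
open MeasureTheory

/-- Let `(G, α, A[τ_Γ])` be a pro-C*-dynamical system with `α` strongly bounded,
`φ` a continuous representation of `A` on a Hilbert space `H`, and `φ̃` the induced
representation on `L²(G, H)` given by `(φ̃ (a) ξ) (s) = φ (α_{s⁻¹} a) (ξ s)`.
Then `ker φ̃ ⊆ ker φ`. -/
theorem induced_representation_kernel_subset
    {A : Type*} [Ring A] [StarRing A] [Algebra ℂ A]
    {Λ : Type*} (p : SeminormFamily ℂ A Λ)
    {G : Type*} [Group G] [TopologicalSpace G] [IsTopologicalGroup G] [LocallyCompactSpace G]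
    [MeasurableSpace G] [BorelSpace G]
    (μ : Measure G) [μ.IsHaarMeasure]
    (α : G → A ≃⋆ₐ[ℂ] A)
    (hmul : ∀ (s t : G) (a : A), α (s * t) a = α s (α t a))
    {H : Type*} [NormedAddCommGroup H] [InnerProductSpace ℂ H] [CompleteSpace H]
    (φ : A → H →L[ℂ] H)
    (hadd : ∀ a b, φ (a + b) = φ a + φ b)
    (hmulφ : ∀ a b, φ (a * b) = (φ a).comp (φ b))
    (hstar : ∀ a, φ (star a) = ContinuousLinearMap.adjoint (φ a))
    (lam mu : Λ)
    (hφ : ∀ a : A, ‖φ a‖ ≤ p lam a)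
    (hsb : ∀ (t : G) (b : A), p lam (α t b) ≤ p mu b)
    (hcont : ∀ a : A, Continuous fun s : G => φ (α s⁻¹ a))
    (φt : A → Lp H 2 μ →L[ℂ] Lp H 2 μ)
    (hφt : ∀ (a : A) (ξ : Lp H 2 μ),
      (φt a ξ : G → H) =ᵐ[μ] fun s : G => φ (α s⁻¹ a) (ξ s)) :
    ∀ a : A, φt a = 0 → φ a = 0 := by
  intro a ha
  -- α 1 = id
  have hα1 : ∀ b : A, α 1 b = b := by
    intro b
    have := hmul 1 1 b
    simp only [one_mul] at this
    exact ((α 1).injective this.symm)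
  ext v
  -- pick open nbhd of 1 with finite measure
  obtain ⟨K, hK, hKmem⟩ := exists_compact_mem_nhds (1 : G)
  set U := interior K with hUdef
  have hUopen : IsOpen U := isOpen_interior
  have hU1 : (1 : G) ∈ U := mem_interior_iff_mem_nhds.2 hKmem
  have hUfin : μ U ≠ ⊤ :=
    ((measure_mono interior_subset).trans_lt hK.measure_lt_top).ne
  -- indicator function
  have hmem : MemLp (U.indicator fun _ : G => v) 2 μ :=
    memLp_indicator_const 2 hUopen.measurableSet v (Or.inr hUfin)
  set ξ : Lp H 2 μ := hmem.toLp _ with hξdef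
  have hξ : (ξ : G → H) =ᵐ[μ] U.indicator fun _ => v := hmem.coeFn_toLp
  have h0 : (φt a ξ : G → H) =ᵐ[μ] 0 := by
    rw [ha]
    simpa using Lp.coeFn_zero (E := H) (p := 2) (μ := μ)
  have key : ∀ᵐ s ∂μ, φ (α s⁻¹ a) (U.indicator (fun _ => v) s) = 0 := by
    filter_upwards [hφt a ξ, h0, hξ] with s h1 h2 h3
    rw [← h3, ← h1, h2]
    rfl
  -- the bad set is open and null, hence empty
  set V : Set G := U ∩ {s : G | φ (α s⁻¹ a) v ≠ 0} with hVdef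
  have hVopen : IsOpen V := by
    apply hUopen.inter
    have hc : Continuous fun s : G => φ (α s⁻¹ a) v :=
      (hcont a).clm_apply continuous_const
    exact isOpen_compl_singleton.preimage hc
  have hVnull : μ V = 0 := by
    refine measure_mono_null ?_ key
    intro s hs h
    simp only [Set.mem_setOf_eq] at h
    rw [Set.indicator_of_mem hs.1] at h
    exact hs.2 h
  have hVempty : V = ∅ := hVopen.eq_empty_of_measure_zero hVnull
  by_contra hne
  have : (1 : G) ∈ V := ⟨hU1, by simpa [hα1] using hne⟩
  rw [hVempty] at this
  exact this
end

section
/- Let α be a strongly bounded action of a locally compact group G on a pro-C*-algebra A[τ_Γ]. The map α̃ : A → C_b(G, A) defined by α̃(a)(t) = α_{t^{-1}}(a) is a well-defined injective *-homomorphism with closed range, and for each λ there is μ such that p_λ(a) ≤ sup_{t∈G} p_λ(α̃(a)(t)) ≤ p_μ(a) for all a ∈ A; hence α̃ is a pro-C*-morphism onto its image which is a topological isomorphism onto a closed *-subalgebra. -/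
/-- For a strongly bounded action `α` of a locally compact group `G` on a
pro-C*-algebra `A[τ_Γ]`, the map `α̃ : A → C_b(G, A)`, `α̃ (a) (t) = α_{t⁻¹} a`, is a
well-defined (each `α̃ a` is bounded and continuous) injective `*`-homomorphism, and
for each `λ` there is `μ` with `p_λ (a) ≤ sup_t p_λ (α̃ (a) (t)) ≤ p_μ (a)`; hence
`α̃` is a pro-C*-morphism which is a topological isomorphism onto its (closed)
range. -/
theorem tilde_alpha_embedding
    {A : Type*} [Ring A] [StarRing A] [Algebra ℂ A]
    [UniformSpace A] [IsUniformAddGroup A] [CompleteSpace A] [T2Space A]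
    {Λ : Type*} [Nonempty Λ] (p : SeminormFamily ℂ A Λ)
    (hp : WithSeminorms p) (hdir : Directed (· ≤ ·) p)
    (hC : ∀ (lam : Λ) (a : A), p lam (star a * a) = p lam a ^ 2)
    {G : Type*} [Group G] [TopologicalSpace G] [IsTopologicalGroup G] [LocallyCompactSpace G]
    (α : G → A ≃⋆ₐ[ℂ] A)
    (hmul : ∀ (s t : G) (a : A), α (s * t) a = α s (α t a))
    (hcont : ∀ a : A, Continuous fun t : G => α t a)
    (hsb : ∀ lam : Λ, ∃ mu : Λ, ∀ (t : G) (a : A), p lam (α t a) ≤ p mu a) :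
    -- well-definedness: each `α̃ a` is a bounded continuous `A`-valued function
    (∀ a : A, Continuous (fun t : G => α t⁻¹ a) ∧
      ∀ lam : Λ, BddAbove (Set.range fun t : G => p lam (α t⁻¹ a))) ∧
    -- `α̃` is a `*`-homomorphism into the pointwise operations of `C_b(G, A)`
    (∀ (a b : A) (t : G), α t⁻¹ (a + b) = α t⁻¹ a + α t⁻¹ b) ∧
    (∀ (a b : A) (t : G), α t⁻¹ (a * b) = α t⁻¹ a * α t⁻¹ b) ∧
    (∀ (a : A) (t : G), α t⁻¹ (star a) = star (α t⁻¹ a)) ∧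
    -- injectivity
    (∀ a b : A, (∀ t : G, α t⁻¹ a = α t⁻¹ b) → a = b) ∧
    -- the seminorm sandwich making `α̃` a topological isomorphism onto a closed
    -- `*`-subalgebra
    ∀ lam : Λ, ∃ mu : Λ, ∀ a : A,
      p lam a ≤ (⨆ t : G, p lam (α t⁻¹ a)) ∧ (⨆ t : G, p lam (α t⁻¹ a)) ≤ p mu a := by

  have hone : ∀ a : A, α 1 a = a := by
    intro a
    have h := hmul 1 1 a
    simp only [one_mul] at h
    exact ((α 1).injective h.symm)
  refine ⟨?_, ?_, ?_, ?_, ?_, ?_⟩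
  · intro a
    refine ⟨(hcont a).comp continuous_inv, ?_⟩
    intro lam
    obtain ⟨mu, hmu⟩ := hsb lam
    exact ⟨p mu a, by rintro x ⟨t, rfl⟩; exact hmu t⁻¹ a⟩
  · intro a b t; exact map_add (α t⁻¹) a b
  · intro a b t; exact map_mul (α t⁻¹) a b
  · intro a t; exact map_star (α t⁻¹) a
  · intro a b h
    have := h 1
    rwa [inv_one, hone, hone] at this
  · intro lam
    obtain ⟨mu, hmu⟩ := hsb lam
    refine ⟨mu, fun a => ⟨?_, ?_⟩⟩
    · have hb : BddAbove (Set.range fun t : G => p lam (α t⁻¹ a)) :=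
        ⟨p mu a, by rintro x ⟨t, rfl⟩; exact hmu t⁻¹ a⟩
      have := le_ciSup hb (1 : G)
      simpa [inv_one, hone] using this
    · exact ciSup_le fun t => hmu t⁻¹ a
end
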